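/- For every tower of permutations 𝔖 = {(A_ξ, F_ξ, 𝔅_ξ)}_{ξ∈W} and every ζ ∈ W, the set {p ∈ ℚ(𝔖) : α^p ≥ ζ} is dense in ℚ(𝔖). -/

import Mathlib

/-- A finite subalgebra of the Boolean algebra `𝒫(ℕ)` of subsets of `ℕ`. -/
def IsFiniteSubalgebra (𝔅 : Set (Set ℕ)) : Prop :=
  𝔅.Finite ∧ ∅ ∈ 𝔅 ∧ Set.univ ∈ 𝔅 ∧ (∀ X ∈ 𝔅, Xᶜ ∈ 𝔅) ∧ ∀ X ∈ 𝔅, ∀ Y ∈ 𝔅, X ∪ Y ∈ 𝔅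

/-- A tower of permutations `𝔖 = {(A_ξ, F_ξ, 𝔅_ξ)}_{ξ ∈ W}` indexed by a set `W`
of ordinals. -/
structure Tower (W : Set Ordinal) where
  /-- the sets `A_ξ` -/
  A : Ordinal → Set ℕ
  /-- the permutations `F_ξ` of `ℕ` -/
  F : Ordinal → (ℕ → ℕ)
  /-- the finite subalgebras `𝔅_ξ` -/
  Alg : Ordinal → Set (Set ℕ)
  A_inf : ∀ ξ ∈ W, (A ξ).Infinite
  F_bij : ∀ ξ ∈ W, Function.Bijective (F ξ)
  F_seg : ∀ ξ ∈ W, ∀ m ∈ A ξ, Set.BijOn (F ξ) (Set.Iio m) (Set.Iio m)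
  Alg_fin : ∀ ξ ∈ W, IsFiniteSubalgebra (Alg ξ)
  Alg_mono : ∀ ξ ∈ W, ∀ ζ ∈ W, ξ < ζ → Alg ξ ⊆ Alg ζ
  A_ae_sub : ∀ ξ ∈ W, ∀ ζ ∈ W, ξ < ζ → (A ζ \ A ξ).Finite
  F_ae_eq : ∀ ξ ∈ W, ∀ ζ ∈ W, ξ < ζ → ∀ B ∈ Alg ξ,
    (symmDiff (F ζ '' B) (F ξ '' B)).Finite

/-- A condition `p = (a^p, f^p, α^p, 𝔅^p)` in the forcing `ℚ(𝔖)`.  The finite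
partial function `f^p` (whose domain is `{0, …, max(a^p) − 1}`) is modelled as a
total function on `ℕ` which is the identity from `max(a^p)` onwards. -/
structure QCond {W : Set Ordinal} (S : Tower W) where
  /-- the finite nonempty set `a^p` -/
  a : Finset ℕ
  /-- the finite partial permutation `f^p` -/
  f : ℕ → ℕ
  /-- the ordinal `α^p ∈ W` -/
  α : Ordinal
  /-- the finite subalgebra `𝔅^p` -/
  Alg : Set (Set ℕ)
  a_ne : a.Nonempty
  f_seg : ∀ m ∈ a, Set.BijOn f (Set.Iio m) (Set.Iio m)
  f_pad : ∀ i, a.max' a_ne ≤ i → f i = i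
  α_mem : α ∈ W
  max_mem : a.max' a_ne ∈ S.A α
  Alg_fin : IsFiniteSubalgebra Alg

namespace QCond

variable {W : Set Ordinal} {S : Tower W}

/-- `max (a^p)`. -/
def top (p : QCond S) : ℕ := p.a.max' p.a_ne

/-- The order `p ≤ q` on `ℚ(𝔖)`. -/
def le (p q : QCond S) : Prop :=
  p.a ⊆ q.a ∧
  q.a.filter (fun n => n ≤ p.top) = p.a ∧
  (∀ i, i < p.top → q.f i = p.f i) ∧
  p.Alg ⊆ q.Alg ∧
  p.α ≤ q.α ∧
  ({n : ℕ | n ∈ S.A q.α ∧ q.top ≤ n} ∪ ((↑q.a : Set ℕ) \ ↑p.a)) ⊆ S.A p.α ∧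
  ∀ B ∈ p.Alg ∩ S.Alg p.α,
    (∀ m ∈ q.a, ∀ n ∈ q.a, p.top ≤ m → m < n →
      q.f '' (B ∩ Set.Ico m n) = S.F p.α '' (B ∩ Set.Ico m n)) ∧
    (∀ m ∈ S.A q.α, ∀ n ∈ S.A q.α, q.top ≤ m → m < n →
      S.F q.α '' (B ∩ Set.Ico m n) = S.F p.α '' (B ∩ Set.Ico m n))

/-- A subset `D ⊆ ℚ(𝔖)` is dense. -/
def IsDense (D : Set (QCond S)) : Prop := ∀ p : QCond S, ∃ q ∈ D, le p q

/-- Two conditions are compatible. -/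
def Compatible (p q : QCond S) : Prop := ∃ r : QCond S, le p r ∧ le q r

end QCond


section Helpers

open Set

lemma bijOn_of_image_eq {F : ℕ → ℕ} (hinj : Function.Injective F) {s t : Set ℕ}
    (h : F '' s = t) : Set.BijOn F s t :=
  ⟨Set.mapsTo_iff_image_subset.mpr h.le, hinj.injOn, h.ge⟩

lemma image_Ico_eq {F : ℕ → ℕ} (hinj : Function.Injective F) {m n : ℕ}
    (hm : Set.BijOn F (Set.Iio m) (Set.Iio m)) (hn : Set.BijOn F (Set.Iio n) (Set.Iio n)) :
    F '' Set.Ico m n = Set.Ico m n := by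
  have h1 : Set.Ico m n = Set.Iio n \ Set.Iio m := by
    ext x; simp only [Set.mem_Ico, Set.mem_diff, Set.mem_Iio, not_lt]; exact and_comm
  rw [h1, Set.image_diff hinj, hn.image_eq, hm.image_eq]

lemma image_inter_Ico {F : ℕ → ℕ} (hinj : Function.Injective F) {m n : ℕ}
    (hm : Set.BijOn F (Set.Iio m) (Set.Iio m)) (hn : Set.BijOn F (Set.Iio n) (Set.Iio n))
    (B : Set ℕ) : F '' (B ∩ Set.Ico m n) = (F '' B) ∩ Set.Ico m n := by
  rw [Set.image_inter hinj, image_Ico_eq hinj hm hn]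

lemma qcond_le_refl {W : Set Ordinal} {S : Tower W} (p : QCond S) : QCond.le p p := by
  refine ⟨subset_rfl, ?_, fun i _ => rfl, subset_rfl, le_rfl, ?_, ?_⟩
  · exact Finset.filter_true_of_mem (fun n hn => Finset.le_max' _ n hn)
  · rintro n (⟨h1, h2⟩ | ⟨h1, h2⟩)
    · exact h1
    · exact (h2 h1).elim
  · intro B hB
    refine ⟨?_, ?_⟩
    · intro m hm n hn h1 h2
      exact absurd (lt_of_lt_of_le h2 (Finset.le_max' _ n hn)) (not_lt.mpr h1)
    · intro m hm n hn h1 h2; rfl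

end Helpers

/-- For every `ζ ∈ W`, the set `{p ∈ ℚ(𝔖) : α^p ≥ ζ}` is dense in `ℚ(𝔖)`. -/
theorem dense_alpha_ge (W : Set Ordinal) (S : Tower W) (ζ : Ordinal) (hζ : ζ ∈ W) :
    QCond.IsDense {p : QCond S | ζ ≤ p.α} := by
  intro p
  rcases le_or_gt ζ p.α with hle | hlt
  · exact ⟨p, hle, qcond_le_refl p⟩
  have hα := p.α_mem
  have hAfin : (S.A ζ \ S.A p.α).Finite := S.A_ae_sub p.α hα ζ hζ hlt
  have hBfin : (⋃ B ∈ p.Alg ∩ S.Alg p.α, symmDiff (S.F ζ '' B) (S.F p.α '' B)).Finite :=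
    Set.Finite.biUnion (p.Alg_fin.1.subset Set.inter_subset_left)
      (fun B hB => S.F_ae_eq p.α hα ζ hζ hlt B hB.2)
  obtain ⟨N0, hN0⟩ := (hAfin.union hBfin).bddAbove
  set N : ℕ := max (p.top + 1) (N0 + 1) with hN
  obtain ⟨t, htA, htN⟩ := (S.A_inf ζ hζ).exists_gt N
  have ht_top : p.top < t := lt_of_lt_of_le (by omega) (le_of_lt htN)
  have htN0 : N0 < t := lt_of_lt_of_le (by omega) (le_of_lt htN)
  have hsub : ∀ n, n ∈ S.A ζ → N0 < n → n ∈ S.A p.α := by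
    intro n hn hn0
    by_contra hc
    have : n ∈ S.A ζ \ S.A p.α := ⟨hn, hc⟩
    exact absurd (hN0 (Set.mem_union_left _ this)) (not_le.mpr hn0)
  have htα : t ∈ S.A p.α := hsub t htA htN0
  have hsym : ∀ B ∈ p.Alg ∩ S.Alg p.α, ∀ k, N0 < k →
      (k ∈ S.F ζ '' B ↔ k ∈ S.F p.α '' B) := by
    intro B hB k hk
    by_contra hc
    have hmem : k ∈ symmDiff (S.F ζ '' B) (S.F p.α '' B) := by
      rw [Set.mem_symmDiff]
      tauto
    have : k ∈ (S.A ζ \ S.A p.α) ∪ ⋃ B ∈ p.Alg ∩ S.Alg p.α,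
        symmDiff (S.F ζ '' B) (S.F p.α '' B) :=
      Set.mem_union_right _ (Set.mem_biUnion hB hmem)
    exact absurd (hN0 this) (not_le.mpr hk)
  have hFα := (S.F_bij p.α hα).injective
  have hFζ := (S.F_bij ζ hζ).injective
  have hbij_top : Set.BijOn (S.F p.α) (Set.Iio p.top) (Set.Iio p.top) :=
    S.F_seg p.α hα p.top p.max_mem
  have hbij_t : Set.BijOn (S.F p.α) (Set.Iio t) (Set.Iio t) := S.F_seg p.α hα t htα
  set g : ℕ → ℕ := fun i => if i < p.top then p.f i else if i < t then S.F p.α i else i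
    with hg
  have hg_low : ∀ i, i < p.top → g i = p.f i := fun i hi => if_pos hi
  have hg_mid : ∀ i, p.top ≤ i → i < t → g i = S.F p.α i := by
    intro i h1 h2
    simp only [hg, if_neg (not_lt.mpr h1), if_pos h2]
  have hfp_bij : Set.BijOn p.f (Set.Iio p.top) (Set.Iio p.top) :=
    p.f_seg p.top (p.a.max'_mem p.a_ne)
  have hIcoF : S.F p.α '' Set.Ico p.top t = Set.Ico p.top t :=
    image_Ico_eq hFα hbij_top hbij_t
  have hbij_mid : Set.BijOn g (Set.Ico p.top t) (Set.Ico p.top t) := by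
    refine Set.BijOn.congr (bijOn_of_image_eq hFα hIcoF) ?_
    intro x hx
    exact (hg_mid x hx.1 hx.2).symm
  have hbij_low : Set.BijOn g (Set.Iio p.top) (Set.Iio p.top) :=
    Set.BijOn.congr hfp_bij (fun x hx => (hg_low x hx).symm)
  have hbij_g_t : Set.BijOn g (Set.Iio t) (Set.Iio t) := by
    have hu : Set.Iio p.top ∪ Set.Ico p.top t = Set.Iio t :=
      Set.Iio_union_Ico_eq_Iio (le_of_lt ht_top)
    have hd : Disjoint (Set.Iio p.top) (Set.Ico p.top t) := by
      rw [Set.disjoint_left]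
      intro x hx hx'
      exact absurd hx'.1 (not_le.mpr hx)
    have hinj : Set.InjOn g (Set.Iio p.top ∪ Set.Ico p.top t) := by
      rw [Set.injOn_union hd]
      refine ⟨hbij_low.injOn, hbij_mid.injOn, ?_⟩
      intro x hx y hy hxy
      have h1 : g x < p.top := hbij_low.mapsTo hx
      have h2 : p.top ≤ g y := (hbij_mid.mapsTo hy).1
      omega
    have := Set.BijOn.union hbij_low hbij_mid hinj
    rwa [hu] at this
  have hmax_le : ∀ n ∈ p.a, n ≤ p.top := fun n hn => Finset.le_max' _ n hn
  have hqa_ne : (insert t p.a).Nonempty := Finset.insert_nonempty _ _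
  have hqmax : (insert t p.a).max' hqa_ne = t := by
    rw [Finset.max'_insert (H := p.a_ne)]
    exact max_eq_left (le_of_lt ht_top)
  have hf_seg : ∀ m ∈ insert t p.a, Set.BijOn g (Set.Iio m) (Set.Iio m) := by
    intro m hm
    rcases Finset.mem_insert.mp hm with rfl | hm
    · exact hbij_g_t
    · have hmle : m ≤ p.top := hmax_le m hm
      exact Set.BijOn.congr (p.f_seg m hm)
        (fun x hx => (hg_low x (lt_of_lt_of_le hx hmle)).symm)
  have hf_pad : ∀ i, (insert t p.a).max' hqa_ne ≤ i → g i = i := by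
    intro i hi
    rw [hqmax] at hi
    simp only [hg, if_neg (not_lt.mpr (le_trans (le_of_lt ht_top) hi)),
      if_neg (not_lt.mpr hi)]
  have hmax_mem : (insert t p.a).max' hqa_ne ∈ S.A ζ := by rw [hqmax]; exact htA
  refine ⟨⟨insert t p.a, g, ζ, p.Alg, hqa_ne, hf_seg, hf_pad, hζ, hmax_mem, p.Alg_fin⟩,
    le_refl ζ, ?_⟩
  refine ⟨Finset.subset_insert _ _, ?_, hg_low, subset_rfl, le_of_lt hlt, ?_, ?_⟩
  · -- filter
    rw [Finset.filter_insert, if_neg (by simp [not_le.mpr ht_top]),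
      Finset.filter_true_of_mem hmax_le]
  · -- A-inclusion
    rintro n (⟨hn, hn'⟩ | ⟨hn, hn'⟩)
    · simp only [QCond.top, hqmax] at hn'
      exact hsub n hn (lt_of_lt_of_le htN0 hn')
    · rcases Finset.mem_insert.mp (by exact_mod_cast hn) with rfl | hmem
      · exact htα
      · exact absurd (Finset.mem_coe.mpr hmem) hn'
  · -- main condition
    intro B hB
    constructor
    · intro m hm n hn h1 h2
      -- n must be t, m must be p.top
      have hnt : n = t := by
        rcases Finset.mem_insert.mp hn with rfl | hn'
        · rfl
        · exact absurd (lt_of_le_of_lt h1 h2) (not_lt.mpr (hmax_le n hn'))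
      have hmt : m = p.top := by
        rcases Finset.mem_insert.mp hm with rfl | hm'
        · omega
        · exact le_antisymm (hmax_le m hm') h1
      subst hnt hmt
      apply Set.image_congr
      intro x hx
      exact hg_mid x hx.2.1 hx.2.2
    · intro m hm n hn h1 h2
      simp only [QCond.top, hqmax] at h1
      have hmN : N0 < m := lt_of_lt_of_le htN0 h1
      have hmα : m ∈ S.A p.α := hsub m hm hmN
      have hnα : n ∈ S.A p.α := hsub n hn (lt_trans hmN h2)
      rw [image_inter_Ico hFζ (S.F_seg ζ hζ m hm) (S.F_seg ζ hζ n hn),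
        image_inter_Ico hFα (S.F_seg p.α hα m hmα) (S.F_seg p.α hα n hnα)]
      ext k
      simp only [Set.mem_inter_iff, Set.mem_Ico, and_congr_left_iff]
      intro hk
      exact hsym B hB k (lt_of_lt_of_le hmN hk.1)
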